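/- Let (f,g) ∈ 𝒞₂(I) and suppose there exist α, β, γ, δ, ε, η ∈ ℝ with (α,β,γ) ≠ (0,0,0) such that αf² + βfg + γg² + δf + εg + η = 0 on I. Then there exist real constants a, b, c such that a(f')² + b f'g' + c(g')² = (W^{2,1}_{f,g})^{2/3} on I, where W^{2,1}_{f,g} = f''g' − f'g''. -/

import Mathlib

/-- The real cube root of a real number. -/
noncomputable def cbrt (x : ℝ) : ℝ :=
  if 0 ≤ x then x ^ ((1 : ℝ) / 3) else -((-x) ^ ((1 : ℝ) / 3))

lemma cbrt_cube (x : ℝ) : cbrt x ^ 3 = x := by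
  unfold cbrt
  split_ifs with h
  · rw [← Real.rpow_natCast (x ^ ((1:ℝ)/3)) 3, ← Real.rpow_mul h]
    norm_num
  · have h' : (0:ℝ) ≤ -x := by linarith
    rw [Odd.neg_pow (show Odd 3 by decide), ← Real.rpow_natCast ((-x) ^ ((1:ℝ)/3)) 3,
        ← Real.rpow_mul h']
    norm_num

lemma cube_inj {s t : ℝ} (h : s ^ 3 = t ^ 3) : s = t :=
  (Odd.strictMono_pow (R := ℝ) (show Odd 3 by decide)).injective h

theorem quad_deriv_relation_of_conic
    (I : Set ℝ) (hI : IsOpen I) (hIc : I.OrdConnected) (hne : I.Nonempty)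
    (f g : ℝ → ℝ)
    (hf : ContDiffOn ℝ 2 f I) (hg : ContDiffOn ℝ 2 g I)
    (hg' : ∀ x ∈ I, deriv g x ≠ 0)
    (hphi' : ∀ x ∈ I, deriv (fun t => deriv f t / deriv g t) x ≠ 0)
    (α β γ δ ε η : ℝ) (habc : (α, β, γ) ≠ (0, 0, 0))
    (hconic : ∀ x ∈ I,
      α * f x ^ 2 + β * f x * g x + γ * g x ^ 2 + δ * f x + ε * g x + η = 0) :
    ∃ a b c : ℝ, ∀ x ∈ I,
      a * (deriv f x) ^ 2 + b * deriv f x * deriv g x + c * (deriv g x) ^ 2 =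
        (cbrt (iteratedDeriv 2 f x * deriv g x - deriv f x * iteratedDeriv 2 g x)) ^ 2 := by
  have hconv : Convex ℝ I := hIc.convex
  have hit : ∀ h : ℝ → ℝ, iteratedDeriv 2 h = deriv (deriv h) := fun h => by
    rw [show (2:ℕ) = 1 + 1 from rfl, iteratedDeriv_succ, iteratedDeriv_one]
  -- basic differentiability
  have hfd : ∀ x ∈ I, HasDerivAt f (deriv f x) x := fun x hx =>
    ((hf.differentiableOn (by norm_num)).differentiableAt (hI.mem_nhds hx)).hasDerivAt
  have hgd : ∀ x ∈ I, HasDerivAt g (deriv g x) x := fun x hx =>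
    ((hg.differentiableOn (by norm_num)).differentiableAt (hI.mem_nhds hx)).hasDerivAt
  have hf1 : ContDiffOn ℝ 1 (deriv f) I :=
    ((contDiffOn_succ_iff_deriv_of_isOpen hI).1 (by exact_mod_cast hf)).2.2
  have hg1 : ContDiffOn ℝ 1 (deriv g) I :=
    ((contDiffOn_succ_iff_deriv_of_isOpen hI).1 (by exact_mod_cast hg)).2.2
  have hfd2 : ∀ x ∈ I, HasDerivAt (deriv f) (deriv (deriv f) x) x := fun x hx =>
    ((hf1.differentiableOn (by norm_num)).differentiableAt (hI.mem_nhds hx)).hasDerivAt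
  have hgd2 : ∀ x ∈ I, HasDerivAt (deriv g) (deriv (deriv g) x) x := fun x hx =>
    ((hg1.differentiableOn (by norm_num)).differentiableAt (hI.mem_nhds hx)).hasDerivAt
  -- W ≠ 0
  have hW : ∀ x ∈ I, deriv (deriv f) x * deriv g x - deriv f x * deriv (deriv g) x ≠ 0 := by
    intro x hx
    have hdiv : HasDerivAt (fun t => deriv f t / deriv g t)
        ((deriv (deriv f) x * deriv g x - deriv f x * deriv (deriv g) x) / deriv g x ^ 2) x :=
      (hfd2 x hx).div (hgd2 x hx) (hg' x hx)
    have h := hphi' x hx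
    rw [hdiv.deriv] at h
    intro h0
    exact h (by rw [h0, zero_div])
  -- first differentiation of the conic
  have hA : ∀ x ∈ I, (2*α*f x + β*g x + δ) * deriv f x + (β*f x + 2*γ*g x + ε) * deriv g x = 0 := by
    intro x hx
    have h1 := hfd x hx
    have h2 := hgd x hx
    have hF : HasDerivAt
        (fun t => α * f t ^ 2 + β * f t * g t + γ * g t ^ 2 + δ * f t + ε * g t + η)
        ((2*α*f x + β*g x + δ) * deriv f x + (β*f x + 2*γ*g x + ε) * deriv g x) x := by
      have h := ((((((h1.pow 2).const_mul α).add ((h1.const_mul β).mul h2)).add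
          ((h2.pow 2).const_mul γ)).add (h1.const_mul δ)).add (h2.const_mul ε)).add_const η
      convert h using 1
      · rfl
      · rfl
      · rfl
      push_cast
      ring
    have hF0 : HasDerivAt
        (fun t => α * f t ^ 2 + β * f t * g t + γ * g t ^ 2 + δ * f t + ε * g t + η) 0 x :=
      (hasDerivAt_const x (0:ℝ)).congr_of_eventuallyEq
        (Filter.eventuallyEq_of_mem (hI.mem_nhds hx) (fun t ht => hconic t ht))
    exact hF.unique hF0
  -- second differentiation of the conic
  have hB : ∀ x ∈ I,
      ((2*α*deriv f x + β*deriv g x) * deriv f x + (2*α*f x + β*g x + δ) * deriv (deriv f) x)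
      + ((β*deriv f x + 2*γ*deriv g x) * deriv g x
        + (β*f x + 2*γ*g x + ε) * deriv (deriv g) x) = 0 := by
    intro x hx
    have h1 := hfd x hx
    have h2 := hgd x hx
    have hu : HasDerivAt (fun t => 2*α*f t + β*g t + δ) (2*α*deriv f x + β*deriv g x) x :=
      ((h1.const_mul (2*α)).add (h2.const_mul β)).add_const δ
    have hv : HasDerivAt (fun t => β*f t + 2*γ*g t + ε) (β*deriv f x + 2*γ*deriv g x) x :=
      ((h1.const_mul β).add (h2.const_mul (2*γ))).add_const ε
    have hG : HasDerivAt
        (fun t => (2*α*f t + β*g t + δ) * deriv f t + (β*f t + 2*γ*g t + ε) * deriv g t)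
        (((2*α*deriv f x + β*deriv g x) * deriv f x
          + (2*α*f x + β*g x + δ) * deriv (deriv f) x)
        + ((β*deriv f x + 2*γ*deriv g x) * deriv g x
          + (β*f x + 2*γ*g x + ε) * deriv (deriv g) x)) x :=
      (hu.mul (hfd2 x hx)).add (hv.mul (hgd2 x hx))
    have hG0 : HasDerivAt
        (fun t => (2*α*f t + β*g t + δ) * deriv f t + (β*f t + 2*γ*g t + ε) * deriv g t) 0 x :=
      (hasDerivAt_const x (0:ℝ)).congr_of_eventuallyEq
        (Filter.eventuallyEq_of_mem (hI.mem_nhds hx) (fun t ht => hA t ht))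
    exact hG.unique hG0
  -- u * W = -2 * P * g'
  have huW : ∀ x ∈ I,
      (2*α*f x + β*g x + δ) * (deriv (deriv f) x * deriv g x - deriv f x * deriv (deriv g) x)
      = -2 * (α*(deriv f x)^2 + β*deriv f x*deriv g x + γ*(deriv g x)^2) * deriv g x := by
    intro x hx
    linear_combination (deriv g x) * hB x hx - (deriv (deriv g) x) * hA x hx
  -- the invariant E is constant
  obtain ⟨x₀, hx₀⟩ := hne
  have hE0F : ∀ x ∈ I, HasDerivAt
      (fun t => (2*α*f t + β*g t + δ)^2
        * (α*(deriv f t)^2 + β*deriv f t*deriv g t + γ*(deriv g t)^2) / (deriv g t)^2) 0 x := by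
    intro x hx
    have h1 := hfd x hx
    have h2 := hgd x hx
    have hf2 := hfd2 x hx
    have hg2 := hgd2 x hx
    have hu : HasDerivAt (fun t => 2*α*f t + β*g t + δ) (2*α*deriv f x + β*deriv g x) x :=
      ((h1.const_mul (2*α)).add (h2.const_mul β)).add_const δ
    have hP : HasDerivAt
        (fun t => α*(deriv f t)^2 + β*deriv f t*deriv g t + γ*(deriv g t)^2)
        (α*(2*deriv f x^1*deriv (deriv f) x)
          + ((β*deriv (deriv f) x)*deriv g x + (β*deriv f x)*deriv (deriv g) x)
          + γ*(2*deriv g x^1*deriv (deriv g) x)) x := by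
      have h := (((hf2.pow 2).const_mul α).add ((hf2.const_mul β).mul hg2)).add
        ((hg2.pow 2).const_mul γ)
      convert h using 1
      · rfl
      · rfl
      · rfl
      norm_num
    have hE := ((hu.pow 2).mul hP).div (hg2.pow 2) (pow_ne_zero 2 (hg' x hx))
    convert hE using 1
    · rfl
    · rfl
    · rfl
    rw [eq_comm, div_eq_zero_iff]
    left
    simp only [Pi.pow_apply, Pi.mul_apply]
    push_cast
    linear_combination
      ((2*α*f x + β*g x + δ) * (2*α*deriv f x + β*deriv g x) * (deriv g x)^2) * hB x hx
      - ((2*α*f x + β*g x + δ) * (2*α*deriv f x + β*deriv g x) * deriv g x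
          * deriv (deriv g) x) * hA x hx
  obtain ⟨c₀, hEc⟩ : ∃ c₀ : ℝ, ∀ x ∈ I,
      (2*α*f x + β*g x + δ)^2 * (α*(deriv f x)^2 + β*deriv f x*deriv g x + γ*(deriv g x)^2)
        = c₀ * (deriv g x)^2 := by
    refine ⟨(2*α*f x₀ + β*g x₀ + δ)^2
        * (α*(deriv f x₀)^2 + β*deriv f x₀*deriv g x₀ + γ*(deriv g x₀)^2) / (deriv g x₀)^2,
      fun x hx => ?_⟩
    have hcst : (fun t => (2*α*f t + β*g t + δ)^2
        * (α*(deriv f t)^2 + β*deriv f t*deriv g t + γ*(deriv g t)^2) / (deriv g t)^2) x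
        = (fun t => (2*α*f t + β*g t + δ)^2
        * (α*(deriv f t)^2 + β*deriv f t*deriv g t + γ*(deriv g t)^2) / (deriv g t)^2) x₀ := by
      refine hconv.is_const_of_fderivWithin_eq_zero
        (fun z hz => ((hE0F z hz).differentiableAt).differentiableWithinAt)
        (fun z hz => ?_) hx hx₀
      have h0 : HasFDerivAt (fun t => (2*α*f t + β*g t + δ)^2
          * (α*(deriv f t)^2 + β*deriv f t*deriv g t + γ*(deriv g t)^2) / (deriv g t)^2)
          (0 : ℝ →L[ℝ] ℝ) z := by
        have h := hasDerivAt_iff_hasFDerivAt.1 (hE0F z hz)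
        have hz0 : ContinuousLinearMap.toSpanSingleton ℝ (0:ℝ) = 0 := by ext; simp
        rwa [hz0] at h
      exact h0.hasFDerivWithinAt.fderivWithin (hI.uniqueDiffOn z hz)
    simp only at hcst
    rw [div_eq_iff (pow_ne_zero 2 (hg' x hx))] at hcst
    exact hcst
  by_cases hc0 : c₀ = 0
  · -- degenerate case: contradiction
    exfalso
    have hu0 : ∀ x ∈ I, 2*α*f x + β*g x + δ = 0 := by
      intro x hx
      have h := hEc x hx
      rw [hc0, zero_mul, mul_eq_zero] at h
      rcases h with h | h
      · exact pow_eq_zero_iff (by norm_num) |>.1 h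
      · have h2 : (2*α*f x + β*g x + δ)
            * (deriv (deriv f) x * deriv g x - deriv f x * deriv (deriv g) x) = 0 := by
          linear_combination huW x hx - (2*deriv g x) * h
        rcases mul_eq_zero.1 h2 with h3 | h3
        · exact h3
        · exact absurd h3 (hW x hx)
    have hv0 : ∀ x ∈ I, β*f x + 2*γ*g x + ε = 0 := by
      intro x hx
      have h := hA x hx
      rw [hu0 x hx, zero_mul, zero_add, mul_eq_zero] at h
      rcases h with h | h
      · exact h
      · exact absurd h (hg' x hx)
    have hud : ∀ x ∈ I, 2*α*deriv f x + β*deriv g x = 0 := by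
      intro x hx
      have hu : HasDerivAt (fun t => 2*α*f t + β*g t + δ) (2*α*deriv f x + β*deriv g x) x :=
        (((hfd x hx).const_mul (2*α)).add ((hgd x hx).const_mul β)).add_const δ
      have hu0' : HasDerivAt (fun t => 2*α*f t + β*g t + δ) 0 x :=
        (hasDerivAt_const x (0:ℝ)).congr_of_eventuallyEq
          (Filter.eventuallyEq_of_mem (hI.mem_nhds hx) (fun t ht => hu0 t ht))
      exact hu.unique hu0'
    have hvd : ∀ x ∈ I, β*deriv f x + 2*γ*deriv g x = 0 := by
      intro x hx
      have hv : HasDerivAt (fun t => β*f t + 2*γ*g t + ε) (β*deriv f x + 2*γ*deriv g x) x :=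
        (((hfd x hx).const_mul β).add ((hgd x hx).const_mul (2*γ))).add_const ε
      have hv0' : HasDerivAt (fun t => β*f t + 2*γ*g t + ε) 0 x :=
        (hasDerivAt_const x (0:ℝ)).congr_of_eventuallyEq
          (Filter.eventuallyEq_of_mem (hI.mem_nhds hx) (fun t ht => hv0 t ht))
      exact hv.unique hv0'
    by_cases hβ : β = 0
    · by_cases hα : α = 0
      · by_cases hγ : γ = 0
        · exact habc (by rw [hα, hβ, hγ])
        · have h := hvd x₀ hx₀
          rw [hβ, zero_mul, zero_add] at h
          exact hg' x₀ hx₀ (by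
            have : (2*γ) * deriv g x₀ = 0 := by linarith
            rcases mul_eq_zero.1 this with h' | h'
            · exact absurd h' (by intro hh; exact hγ (by linarith))
            · exact h')
      · -- f' = 0 on I
        have hf'0 : ∀ x ∈ I, deriv f x = 0 := by
          intro x hx
          have h := hud x hx
          rw [hβ, zero_mul, add_zero] at h
          rcases mul_eq_zero.1 h with h' | h'
          · exact absurd h' (by intro hh; exact hα (by linarith))
          · exact h'
        have hev : (fun t => deriv f t / deriv g t) =ᶠ[nhds x₀] fun _ => (0:ℝ) :=
          Filter.eventuallyEq_of_mem (hI.mem_nhds hx₀)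
            (fun t ht => by rw [hf'0 t ht, zero_div])
        exact hphi' x₀ hx₀ (by rw [hev.deriv_eq, deriv_const])
    · -- f'/g' = -(2γ)/β on I
      have hev : (fun t => deriv f t / deriv g t) =ᶠ[nhds x₀] fun _ => -(2*γ)/β :=
        Filter.eventuallyEq_of_mem (hI.mem_nhds hx₀) (fun t ht => by
          have h := hvd t ht
          rw [div_eq_div_iff (hg' t ht) hβ]
          linear_combination h)
      exact hphi' x₀ hx₀ (by rw [hev.deriv_eq, deriv_const])
  · -- nondegenerate case
    refine ⟨cbrt (4/c₀) * α, cbrt (4/c₀) * β, cbrt (4/c₀) * γ, fun x hx => ?_⟩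
    rw [hit f, hit g]
    set W := deriv (deriv f) x * deriv g x - deriv f x * deriv (deriv g) x with hWdef
    set P := α*(deriv f x)^2 + β*deriv f x*deriv g x + γ*(deriv g x)^2 with hPdef
    have h1 : (2*α*f x + β*g x + δ)^2 * W^2 = 4 * P^2 * (deriv g x)^2 := by
      have h := huW x hx
      linear_combination ((2*α*f x + β*g x + δ) * W - 2 * P * deriv g x) * h
    have h2 : c₀ * W^2 * (deriv g x)^2 = 4 * P^3 * (deriv g x)^2 := by
      linear_combination (-(W^2)) * hEc x hx + P * h1
    have h3 : c₀ * W^2 = 4 * P^3 := by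
      apply mul_right_cancel₀ (pow_ne_zero 2 (hg' x hx))
      linear_combination h2
    have hkey : cbrt (4/c₀) * P = cbrt W ^ 2 := by
      refine cube_inj ?_
      have e1 := cbrt_cube (4/c₀)
      have e2 := cbrt_cube W
      have e3 : (cbrt W ^ 2)^3 = W^2 := by
        rw [← pow_mul, show 2*3 = 3*2 from rfl, pow_mul, e2]
      rw [mul_pow, e1, e3, div_mul_eq_mul_div, div_eq_iff hc0]
      linear_combination -h3
    linear_combination hkey
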